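/- Let n be odd, and let S = {a_1, ..., a_n} be a balanced multiset of nonnegative integers with at least two a_i positive. Then there exist nonnegative integers t_1, ..., t_n with t_i >= a_i for all i such that the nim-sum of t_1, ..., t_n is 0 and the nim-sum of (t_1 - a_1), ..., (t_n - a_n) is 0. -/

import Mathlib

/-- The nim-sum (bitwise XOR) of a list of naturals. -/
def nimSum (l : List ℕ) : ℕ := l.foldr (· ^^^ ·) 0


lemma nimSum_nil : nimSum [] = 0 := rfl

lemma nimSum_cons (x : ℕ) (l : List ℕ) : nimSum (x :: l) = x ^^^ nimSum l := rfl

lemma xor_mod_two (a b : ℕ) : (a ^^^ b) % 2 = (a % 2 + b % 2) % 2 := by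
  have h := Nat.xor_mod_two_eq_one (a := a) (b := b)
  have h2 : (a ^^^ b) % 2 < 2 := Nat.mod_lt _ (by norm_num)
  omega

lemma two_mul_add_xor (x y τ σ : ℕ) (hτ : τ ≤ 1) (hσ : σ ≤ 1) :
    (2 * x + τ) ^^^ (2 * y + σ) = 2 * (x ^^^ y) + ((τ + σ) % 2) := by
  have h1 := xor_mod_two (2 * x + τ) (2 * y + σ)
  have h2 : ((2 * x + τ) ^^^ (2 * y + σ)) / 2 = x ^^^ y := by
    rw [Nat.xor_div_two]
    congr 1 <;> omega
  omega

lemma nimSum_ofFn_xor : ∀ {n : ℕ} (u v : Fin n → ℕ),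
    nimSum (List.ofFn fun i => u i ^^^ v i) = nimSum (List.ofFn u) ^^^ nimSum (List.ofFn v) := by
  intro n
  induction n with
  | zero => intro u v; simp [nimSum]
  | succ m ih =>
    intro u v
    simp only [List.ofFn_succ, nimSum_cons, ih]
    rw [Nat.xor_assoc, Nat.xor_assoc]
    congr 1
    rw [← Nat.xor_assoc, ← Nat.xor_assoc, Nat.xor_comm (v 0)]

lemma nimSum_ofFn_two_mul : ∀ {n : ℕ} (u : Fin n → ℕ),
    nimSum (List.ofFn fun i => 2 * u i) = 2 * nimSum (List.ofFn u) := by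
  intro n
  induction n with
  | zero => intro u; simp [nimSum]
  | succ m ih =>
    intro u
    simp only [List.ofFn_succ, nimSum_cons, ih]
    have h := two_mul_add_xor (u 0) (nimSum (List.ofFn fun i => u i.succ)) 0 0
      (Nat.zero_le 1) (Nat.zero_le 1)
    simpa using h

lemma nimSum_ofFn_pow_mul (k : ℕ) {n : ℕ} (u : Fin n → ℕ) :
    nimSum (List.ofFn fun i => 2 ^ k * u i) = 2 ^ k * nimSum (List.ofFn u) := by
  induction k with
  | zero => simp
  | succ m ih =>
    have h : (fun i => 2 ^ (m + 1) * u i) = fun i => 2 * (2 ^ m * u i) := by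
      funext i; ring
    rw [h, nimSum_ofFn_two_mul (fun i => 2 ^ m * u i), ih, pow_succ]
    ring

lemma nimSum_mod_two (l : List ℕ) : nimSum l % 2 = l.sum % 2 := by
  induction l with
  | nil => rfl
  | cons x l ih =>
    rw [nimSum_cons, List.sum_cons, xor_mod_two]
    omega

lemma nimSum_of_le_one {l : List ℕ} (h : ∀ x ∈ l, x ≤ 1) : nimSum l = l.sum % 2 := by
  have h1 : nimSum l < 2 := by
    induction l with
    | nil => norm_num [nimSum_nil]
    | cons x t ih =>
      have hx : x ≤ 1 := h x (by simp)
      have ht : nimSum t < 2 := ih (fun y hy => h y (by simp [hy]))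
      rw [nimSum_cons]
      have := Nat.xor_lt_two_pow (n := 1) (x := x) (y := nimSum t) (by omega) (by omega)
      simpa using this
  have h2 := nimSum_mod_two l
  omega

lemma exists_second_odd {n : ℕ} (f : Fin n → ℕ) (he : Even (∑ i, f i)) {p : Fin n}
    (hp : Odd (f p)) : ∃ q, q ≠ p ∧ Odd (f q) := by
  by_contra hcon
  push_neg at hcon
  have hall : ∀ q ∈ Finset.univ.erase p, f q % 2 = 0 := by
    intro q hq
    have h1 := hcon q (Finset.ne_of_mem_erase hq)
    rw [Nat.odd_iff] at h1
    omega
  have hsum : (∑ i ∈ Finset.univ.erase p, f i) % 2 = 0 := by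
    rw [Finset.sum_nat_mod, Finset.sum_congr rfl hall]
    simp
  have hdec := Finset.add_sum_erase Finset.univ f (Finset.mem_univ p)
  rw [Nat.even_iff] at he
  rw [Nat.odd_iff] at hp
  omega

lemma exists_even_entry {n : ℕ} (hn : Odd n) (b : Fin n → ℕ) (he : Even (∑ i, b i)) :
    ∃ z, b z % 2 = 0 := by
  by_contra hcon
  push_neg at hcon
  have hall : ∀ i ∈ Finset.univ, b i % 2 = 1 := by
    intro i _
    have := hcon i
    omega
  have h1 : (∑ i, b i) % 2 = n % 2 := by
    rw [Finset.sum_nat_mod, Finset.sum_congr rfl hall]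
    simp [Finset.card_univ]
  rw [Nat.even_iff] at he
  rw [Nat.odd_iff] at hn
  omega

lemma nimSum_ofFn_le_one {n : ℕ} (b : Fin n → ℕ) (h1 : ∀ i, b i ≤ 1)
    (he : Even (∑ i, b i)) : nimSum (List.ofFn b) = 0 := by
  rw [nimSum_of_le_one (by
    intro x hx
    rw [List.mem_ofFn] at hx
    obtain ⟨i, rfl⟩ := hx
    exact h1 i)]
  rw [List.sum_ofFn]
  rw [Nat.even_iff] at he
  omega

lemma main_induction {n : ℕ} (hn : Odd n) :
    ∀ (N : ℕ) (b : Fin n → ℕ), (∑ i, b i) ≤ N → Even (∑ i, b i) →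
    ((∃ p q, p ≠ q ∧ Odd (b p) ∧ Odd (b q)) ∨ ∀ i, b i ≤ 1) →
    ∃ t : Fin n → ℕ, (∀ i, b i ≤ t i) ∧ nimSum (List.ofFn t) = 0 ∧
      nimSum (List.ofFn fun i => t i - b i) = 0 := by
  intro N
  induction N with
  | zero =>
    intro b hle heven _
    have hb : ∀ i, b i ≤ 1 := by
      intro i
      have : b i ≤ ∑ j, b j :=
        Finset.single_le_sum (fun j _ => Nat.zero_le (b j)) (Finset.mem_univ i)
      omega
    refine ⟨b, fun i => le_rfl, nimSum_ofFn_le_one b hb heven, ?_⟩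
    have : (fun i => b i - b i) = fun _ : Fin n => 0 := by
      funext i; omega
    rw [this]
    exact nimSum_ofFn_le_one _ (fun i => Nat.zero_le 1) (by simp)
  | succ N ih =>
    intro b hle heven hyp
    by_cases hsmall : ∀ i, b i ≤ 1
    · refine ⟨b, fun i => le_rfl, nimSum_ofFn_le_one b hsmall heven, ?_⟩
      have : (fun i => b i - b i) = fun _ : Fin n => 0 := by
        funext i; omega
      rw [this]
      exact nimSum_ofFn_le_one _ (fun i => Nat.zero_le 1) (by simp)
    · push_neg at hsmall
      obtain ⟨j, hj⟩ := hsmall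
      have hj2 : 2 ≤ b j := by omega
      rcases hyp with ⟨p, q, hpq, hop, hoq⟩ | hall
      swap
      · exact absurd (hall j) (by omega)
      rw [Nat.odd_iff] at hop hoq
      obtain ⟨z, hz⟩ := exists_even_entry hn b heven
      have hpz : p ≠ z := by intro h; rw [h] at hop; omega
      have hqz : q ≠ z := by intro h; rw [h] at hoq; omega
      -- construction of τ
      set τ₁ : Fin n → ℕ := fun i =>
        if i = p then ((b p + 1) / 2 + 1) % 2
        else if b i % 2 = 1 then ((b i + 1) / 2) % 2 else 0 with hτ₁def
      set τ₂ : Fin n → ℕ :=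
        if Even (∑ i, (b i + 1 - τ₁ i) / 2) then τ₁
        else Function.update τ₁ q (1 - τ₁ q) with hτ₂def
      set τ : Fin n → ℕ :=
        if Even (∑ i, τ₂ i) then τ₂ else Function.update τ₂ z (1 - τ₂ z) with hτdef
      have hτ₁le : ∀ i, τ₁ i ≤ 1 := by
        intro i
        simp only [hτ₁def]
        split
        · omega
        · split <;> omega
      have hτ₂le : ∀ i, τ₂ i ≤ 1 := by
        intro i
        rw [hτ₂def]
        split
        · exact hτ₁le i
        · by_cases hiq : i = q
          · subst hiq; rw [Function.update_self]; omega
          · rw [Function.update_of_ne hiq]; exact hτ₁le i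
      have hτle : ∀ i, τ i ≤ 1 := by
        intro i
        rw [hτdef]
        split
        · exact hτ₂le i
        · by_cases hiz : i = z
          · subst hiz; rw [Function.update_self]; omega
          · rw [Function.update_of_ne hiz]; exact hτ₂le i
      set b' : Fin n → ℕ := fun i => (b i + 1 - τ i) / 2 with hb'def
      -- τ agrees with τ₂ away from z
      have hττ₂ : ∀ i, i ≠ z → τ i = τ₂ i := by
        intro i hiz
        rw [hτdef]
        split
        · rfl
        · rw [Function.update_of_ne hiz]
      have hτ₂τ₁ : ∀ i, i ≠ q → τ₂ i = τ₁ i := by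
        intro i hiq
        rw [hτ₂def]
        split
        · rfl
        · rw [Function.update_of_ne hiq]
      have hτp : τ p = τ₁ p := by
        rw [hττ₂ p hpz, hτ₂τ₁ p hpq]
      have hτ₁p : τ₁ p = ((b p + 1) / 2 + 1) % 2 := by
        simp only [hτ₁def, if_pos rfl]
      -- b' is independent of the z-update
      have hb'τ₂ : ∀ i, b' i = (b i + 1 - τ₂ i) / 2 := by
        intro i
        by_cases hiz : i = z
        · subst hiz
          have h1 := hτle i
          have h2 := hτ₂le i
          simp only [hb'def]
          omega
        · simp only [hb'def, hττ₂ i hiz]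
      -- Even sum of b'
      have hEb' : Even (∑ i, b' i) := by
        rw [Finset.sum_congr rfl (fun i _ => hb'τ₂ i)]
        by_cases hC : Even (∑ i, (b i + 1 - τ₁ i) / 2)
        · rw [hτ₂def, if_pos hC] at *
          exact hC
        · have hq2 : τ₂ q = 1 - τ₁ q := by
            rw [hτ₂def, if_neg hC, Function.update_self]
          have hdec1 := Finset.add_sum_erase Finset.univ
            (fun i => (b i + 1 - τ₁ i) / 2) (Finset.mem_univ q)
          have hdec2 := Finset.add_sum_erase Finset.univ
            (fun i => (b i + 1 - τ₂ i) / 2) (Finset.mem_univ q)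
          have hsame : ∑ i ∈ Finset.univ.erase q, (b i + 1 - τ₂ i) / 2
              = ∑ i ∈ Finset.univ.erase q, (b i + 1 - τ₁ i) / 2 := by
            refine Finset.sum_congr rfl (fun i hi => ?_)
            rw [hτ₂τ₁ i (Finset.ne_of_mem_erase hi)]
          rw [hq2] at hdec2
          rw [Nat.not_even_iff] at hC
          rw [Nat.even_iff]
          have h1 := hτ₁le q
          omega
      -- Even sum of τ
      have hEτ : Even (∑ i, τ i) := by
        by_cases hD : Even (∑ i, τ₂ i)
        · rw [hτdef, if_pos hD]
          exact hD
        · have hz2 : τ z = 1 - τ₂ z := by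
            rw [hτdef, if_neg hD, Function.update_self]
          have hdec1 := Finset.add_sum_erase Finset.univ τ₂ (Finset.mem_univ z)
          have hdec2 := Finset.add_sum_erase Finset.univ τ (Finset.mem_univ z)
          have hsame : ∑ i ∈ Finset.univ.erase z, τ i
              = ∑ i ∈ Finset.univ.erase z, τ₂ i := by
            refine Finset.sum_congr rfl (fun i hi => ?_)
            exact hττ₂ i (Finset.ne_of_mem_erase hi)
          rw [Nat.not_even_iff] at hD
          rw [Nat.even_iff]
          have h1 := hτ₂le z
          omega
      -- Odd b' p
      have hOb'p : Odd (b' p) := by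
        rw [Nat.odd_iff]
        have h1 : b' p = (b p + 1 - τ p) / 2 := rfl
        rw [hτp, hτ₁p] at h1
        omega
      -- sum decrease
      have hlt : ∑ i, b' i < ∑ i, b i := by
        refine Finset.sum_lt_sum (fun i _ => ?_) ⟨j, Finset.mem_univ j, ?_⟩
        · have h1 := hτle i
          show (b i + 1 - τ i) / 2 ≤ b i
          omega
        · have h1 := hτle j
          show (b j + 1 - τ j) / 2 < b j
          omega
      obtain ⟨q', hq'p, hOq'⟩ := exists_second_odd b' hEb' hOb'p
      obtain ⟨t', ht'1, ht'2, ht'3⟩ := ih b' (by omega) hEb'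
        (Or.inl ⟨p, q', Ne.symm hq'p, hOb'p, hOq'⟩)
      refine ⟨fun i => 2 * t' i + τ i, ?_, ?_, ?_⟩
      · intro i
        show b i ≤ 2 * t' i + τ i
        have h1 := ht'1 i
        have h2 := hτle i
        have h3 : b' i = (b i + 1 - τ i) / 2 := rfl
        omega
      · have hrw : (fun i => 2 * t' i + τ i) = fun i => (2 * t' i) ^^^ τ i := by
          funext i
          have h := two_mul_add_xor (t' i) 0 0 (τ i) (Nat.zero_le 1) (hτle i)
          have h2 := hτle i
          simp only [Nat.mul_zero, Nat.add_zero, Nat.zero_add, Nat.xor_zero] at h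
          rw [h]
          omega
        rw [hrw, nimSum_ofFn_xor (fun i => 2 * t' i) τ, nimSum_ofFn_two_mul t', ht'2]
        have hτ0 : nimSum (List.ofFn τ) = 0 :=
          nimSum_ofFn_le_one τ hτle hEτ
        rw [hτ0]
        simp
      · have hrw2 : (fun i => 2 * t' i + τ i - b i)
            = fun i => (2 * (t' i - b' i)) ^^^ ((b i + τ i) % 2) := by
          funext i
          have h1 := ht'1 i
          have h2 := hτle i
          have h3 : b' i = (b i + 1 - τ i) / 2 := rfl
          have harith : 2 * t' i + τ i - b i = 2 * (t' i - b' i) + ((b i + τ i) % 2) := by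
            omega
          rw [harith]
          have h := two_mul_add_xor (t' i - b' i) 0 0 ((b i + τ i) % 2)
            (Nat.zero_le 1) (by omega)
          simp only [Nat.mul_zero, Nat.add_zero, Nat.zero_add, Nat.xor_zero] at h
          rw [h]
          omega
        rw [hrw2, nimSum_ofFn_xor (fun i => 2 * (t' i - b' i)) (fun i => (b i + τ i) % 2),
          nimSum_ofFn_two_mul (fun i => t' i - b' i), ht'3]
        have hγ : Even (∑ i, (b i + τ i) % 2) := by
          have h1 := Finset.sum_nat_mod Finset.univ 2 (fun i => b i + τ i)
          rw [Finset.sum_add_distrib] at h1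
          rw [Nat.even_iff] at heven hEτ ⊢
          omega
        have hγ0 : nimSum (List.ofFn fun i => (b i + τ i) % 2) = 0 :=
          nimSum_ofFn_le_one _ (fun i => by omega) hγ
        rw [hγ0]
        simp

theorem stmt10 (n : ℕ) (hodd : Odd n) (a : Fin n → ℕ)
    (hpos : ∃ i j, i ≠ j ∧ 0 < a i ∧ 0 < a j)
    (k : ℕ) (hk : ∀ i, 2 ^ k ∣ a i) (hkmax : ¬ ∀ i, 2 ^ (k + 1) ∣ a i)
    (hbal : (nimSum (List.ofFn a)).testBit k = false) :
    ∃ t : Fin n → ℕ, (∀ i, a i ≤ t i) ∧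
      nimSum (List.ofFn t) = 0 ∧
      nimSum (List.ofFn fun i => t i - a i) = 0 := by
  set b : Fin n → ℕ := fun i => a i / 2 ^ k with hbdef
  have ha : ∀ i, a i = 2 ^ k * b i := fun i => (Nat.mul_div_cancel' (hk i)).symm
  have hafun : a = fun i => 2 ^ k * b i := funext ha
  have hpow : 0 < 2 ^ k := Nat.pow_pos (by norm_num)
  have hnim : nimSum (List.ofFn a) = 2 ^ k * nimSum (List.ofFn b) := by
    rw [hafun]
    exact nimSum_ofFn_pow_mul k b
  -- evenness of nimSum b, hence of ∑ b
  have hmod : nimSum (List.ofFn b) % 2 = 0 := by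
    rw [hnim, Nat.testBit_eq_decide_div_mod_eq, Nat.mul_div_cancel_left _ hpow] at hbal
    simpa using hbal
  have hEsum : Even (∑ i, b i) := by
    have h1 := nimSum_mod_two (List.ofFn b)
    rw [List.sum_ofFn] at h1
    rw [Nat.even_iff]
    omega
  -- an odd entry
  push_neg at hkmax
  obtain ⟨i0, hi0⟩ := hkmax
  have hOi0 : Odd (b i0) := by
    rw [Nat.odd_iff]
    by_contra hcon
    have h2 : b i0 % 2 = 0 := by omega
    obtain ⟨c, hc⟩ := Nat.dvd_of_mod_eq_zero h2
    exact hi0 ⟨c, by rw [ha i0, hc, pow_succ]; ring⟩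
  obtain ⟨q, hqi0, hOq⟩ := exists_second_odd b hEsum hOi0
  obtain ⟨t', ht'1, ht'2, ht'3⟩ := main_induction hodd (∑ i, b i) b le_rfl hEsum
    (Or.inl ⟨i0, q, Ne.symm hqi0, hOi0, hOq⟩)
  refine ⟨fun i => 2 ^ k * t' i, ?_, ?_, ?_⟩
  · intro i
    rw [ha i]
    exact Nat.mul_le_mul_left _ (ht'1 i)
  · rw [nimSum_ofFn_pow_mul k t', ht'2, Nat.mul_zero]
  · have hrw : (fun i => 2 ^ k * t' i - a i) = fun i => 2 ^ k * (t' i - b i) := by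
      funext i
      rw [ha i, Nat.mul_sub_left_distrib]
    rw [hrw, nimSum_ofFn_pow_mul k (fun i => t' i - b i), ht'3, Nat.mul_zero]
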